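/- For any pure state |ψ⟩ on ℂ^d ⊗ ℂ^d, the fidelity between its two marginals satisfies F(ψ_A, ψ_B) ≥ |Tr(P_as ψ) − Tr(P_s ψ)|. -/

import Mathlib

open scoped Matrix Kronecker ComplexOrder

noncomputable section

namespace QEMD

variable {m n : Type*} [Fintype m] [Fintype n] [DecidableEq m] [DecidableEq n]

/-- Total square root: the PSD square root if `A` is PSD, else `0`. -/
def msqrt (A : Matrix n n ℂ) : Matrix n n ℂ :=
  letI := Classical.dec A.PosSemidef
  if h : A.PosSemidef then
    h.1.eigenvectorUnitary.1 * Matrix.diagonal ((↑) ∘ Real.sqrt ∘ h.1.eigenvalues) *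
      (star h.1.eigenvectorUnitary : Matrix n n ℂ)
  else 0

/-- Trace norm `‖A‖₁ = Tr √(AᴴA)`. -/
def traceNorm (A : Matrix n n ℂ) : ℝ :=
  ((msqrt (Aᴴ * A)).trace).re

/-- Trace distance `D(ρ,σ) = ½‖ρ-σ‖₁`. -/
def traceDist (ρ σ : Matrix n n ℂ) : ℝ := traceNorm (ρ - σ) / 2

/-- Fidelity `F(ρ,σ) = Tr √(√ρ σ √ρ)`. -/
def fidelity (ρ σ : Matrix n n ℂ) : ℝ :=
  ((msqrt (msqrt ρ * σ * msqrt ρ)).trace).re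

/-- Density matrix predicate. -/
def IsDensity (ρ : Matrix n n ℂ) : Prop := ρ.PosSemidef ∧ ρ.trace = 1

/-- Projector `|v⟩⟨v|` onto a vector. -/
def proj (v : n → ℂ) : Matrix n n ℂ := Matrix.of fun i j => v i * star (v j)

/-- Partial trace over the first (left) factor. -/
def traceLeft (ρ : Matrix (m × n) (m × n) ℂ) : Matrix n n ℂ :=
  Matrix.of fun i j => ∑ k, ρ (k, i) (k, j)

/-- Partial trace over the second (right) factor. -/
def traceRight (ρ : Matrix (m × n) (m × n) ℂ) : Matrix m m ℂ :=
  Matrix.of fun i j => ∑ k, ρ (i, k) (j, k)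

/-- The swap operator `S|αβ⟩ = |βα⟩` on `ℂ^d ⊗ ℂ^d`. -/
def swap (d : ℕ) : Matrix (Fin d × Fin d) (Fin d × Fin d) ℂ :=
  Matrix.of fun p q => if p.1 = q.2 ∧ p.2 = q.1 then 1 else 0

/-- Projection onto the symmetric subspace, `P_s = (I + S)/2`. -/
def Psym (d : ℕ) : Matrix (Fin d × Fin d) (Fin d × Fin d) ℂ := (2:ℂ)⁻¹ • (1 + swap d)

/-- Projection onto the antisymmetric subspace, `P_as = (I - S)/2`. -/
def Pasym (d : ℕ) : Matrix (Fin d × Fin d) (Fin d × Fin d) ℂ := (2:ℂ)⁻¹ • (1 - swap d)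

/-- `ρAB` is a quantum coupling of `ρA` and `ρB`. -/
def IsCoupling (ρAB : Matrix (m × n) (m × n) ℂ) (ρA : Matrix m m ℂ)
    (ρB : Matrix n n ℂ) : Prop :=
  IsDensity ρAB ∧ traceRight ρAB = ρA ∧ traceLeft ρAB = ρB

/-- The maximally entangled vector `|Φ⟩ = (1/√d) ∑ᵢ |i⟩|i⟩`. -/
def maxEnt (d : ℕ) : Fin d × Fin d → ℂ :=
  fun p => if p.1 = p.2 then ((1 / Real.sqrt d : ℝ) : ℂ) else 0

set_option linter.unusedSectionVars false
set_option maxHeartbeats 1000000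

def _root_.Matrix.PosSemidef.sqrt {A : Matrix n n ℂ} (h : A.PosSemidef) : Matrix n n ℂ :=
  h.1.eigenvectorUnitary.1 * Matrix.diagonal ((↑) ∘ Real.sqrt ∘ h.1.eigenvalues) *
    (star h.1.eigenvectorUnitary : Matrix n n ℂ)

theorem _root_.Matrix.PosSemidef.posSemidef_sqrt {A : Matrix n n ℂ} (h : A.PosSemidef) :
    h.sqrt.PosSemidef := by
  unfold Matrix.PosSemidef.sqrt
  have hd : (Matrix.diagonal ((↑) ∘ Real.sqrt ∘ h.1.eigenvalues : n → ℂ)).PosSemidef := by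
    refine Matrix.posSemidef_diagonal_iff.mpr fun i => ?_
    simp only [Function.comp_apply, Complex.zero_le_real]
    exact Real.sqrt_nonneg _
  simpa [Matrix.star_eq_conjTranspose] using
    hd.mul_mul_conjTranspose_same (h.1.eigenvectorUnitary : Matrix n n ℂ)

theorem _root_.Matrix.PosSemidef.sqrt_mul_self {A : Matrix n n ℂ} (h : A.PosSemidef) :
    h.sqrt * h.sqrt = A := by
  unfold Matrix.PosSemidef.sqrt
  set U : Matrix n n ℂ := h.1.eigenvectorUnitary.1 with hU
  have hUU : star U * U = 1 := by
    simp [hU]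
  have hD : Matrix.diagonal ((↑) ∘ Real.sqrt ∘ h.1.eigenvalues : n → ℂ) *
      Matrix.diagonal ((↑) ∘ Real.sqrt ∘ h.1.eigenvalues : n → ℂ) =
      Matrix.diagonal ((↑) ∘ h.1.eigenvalues : n → ℂ) := by
    rw [Matrix.diagonal_mul_diagonal]
    congr 1
    funext i
    simp only [Function.comp_apply]
    rw [← Complex.ofReal_mul, Real.mul_self_sqrt (h.eigenvalues_nonneg i)]
  calc _ = U * (Matrix.diagonal ((↑) ∘ Real.sqrt ∘ h.1.eigenvalues : n → ℂ) *
        ((star U * U) * Matrix.diagonal ((↑) ∘ Real.sqrt ∘ h.1.eigenvalues : n → ℂ))) *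
        star U := by simp only [Matrix.mul_assoc]
    _ = U * Matrix.diagonal ((↑) ∘ h.1.eigenvalues : n → ℂ) * star U := by
        rw [hUU, Matrix.one_mul, hD]
    _ = A := by
      conv_rhs => rw [h.1.spectral_theorem]
      simp [hU]


lemma trace_conjTranspose_mul (A B : Matrix n n ℂ) :
    (Aᴴ * B).trace = ∑ p : n × n, (starRingEnd ℂ) (A p.1 p.2) * B p.1 p.2 := by
  rw [Fintype.sum_prod_type, Matrix.trace]
  rw [Finset.sum_comm]
  simp [Matrix.mul_apply, Matrix.diag, Matrix.conjTranspose_apply]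

lemma trace_conjTranspose_mul_self_re (A : Matrix n n ℂ) :
    (Aᴴ * A).trace.re = ∑ p : n × n, ‖A p.1 p.2‖ ^ 2 := by
  rw [trace_conjTranspose_mul, Complex.re_sum]
  refine Finset.sum_congr rfl fun p _ => ?_
  rw [mul_comm, Complex.mul_conj, Complex.ofReal_re, Complex.sq_norm]

lemma abs_trace_conjTranspose_mul_le (A B : Matrix n n ℂ) :
    ‖(Aᴴ * B).trace‖ ≤
      Real.sqrt ((Aᴴ * A).trace.re) * Real.sqrt ((Bᴴ * B).trace.re) := by
  classical
  set a : EuclideanSpace ℂ (n × n) := WithLp.toLp 2 (fun p : n × n => A p.1 p.2) with ha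
  set b : EuclideanSpace ℂ (n × n) := WithLp.toLp 2 (fun p : n × n => B p.1 p.2) with hb
  have h1 : (Aᴴ * B).trace = inner ℂ a b := by
    rw [trace_conjTranspose_mul]
    simp [PiLp.inner_apply, RCLike.inner_apply, ha, hb, mul_comm]
  have h2 : Real.sqrt ((Aᴴ * A).trace.re) = ‖a‖ := by
    rw [trace_conjTranspose_mul_self_re, EuclideanSpace.norm_eq]
  have h3 : Real.sqrt ((Bᴴ * B).trace.re) = ‖b‖ := by
    rw [trace_conjTranspose_mul_self_re, EuclideanSpace.norm_eq]
  rw [h1, h2, h3]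
  exact norm_inner_le_norm a b

lemma psd_trace_re_nonneg {P : Matrix n n ℂ} (hP : P.PosSemidef) : 0 ≤ P.trace.re := by
  unfold Matrix.trace
  rw [Complex.re_sum]
  refine Finset.sum_nonneg fun i _ => ?_
  have h2 : (0:ℂ) ≤ P i i := hP.diag_nonneg
  simpa using (Complex.le_def.mp h2).1

lemma abs_trace_psd_mul_unitary_le {P W : Matrix n n ℂ} (hP : P.PosSemidef)
    (hW : W * Wᴴ = 1) : ‖(P * W).trace‖ ≤ P.trace.re := by
  have hQH : hP.sqrtᴴ = hP.sqrt := hP.posSemidef_sqrt.1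
  have h1 : P * W = hP.sqrtᴴ * (hP.sqrt * W) := by
    rw [hQH, ← Matrix.mul_assoc, hP.sqrt_mul_self]
  have h2 := abs_trace_conjTranspose_mul_le hP.sqrt (hP.sqrt * W)
  rw [← h1] at h2
  have h3 : (hP.sqrtᴴ * hP.sqrt).trace = P.trace := by rw [hQH, hP.sqrt_mul_self]
  have h4 : ((hP.sqrt * W)ᴴ * (hP.sqrt * W)).trace = P.trace := by
    rw [Matrix.conjTranspose_mul, hQH, Matrix.mul_assoc Wᴴ, ← Matrix.mul_assoc hP.sqrt,
      hP.sqrt_mul_self, Matrix.trace_mul_comm, Matrix.mul_assoc, hW, Matrix.mul_one]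
  rw [h3, h4] at h2
  calc ‖(P * W).trace‖ ≤ Real.sqrt P.trace.re * Real.sqrt P.trace.re := h2
    _ = P.trace.re := Real.mul_self_sqrt (psd_trace_re_nonneg hP)


lemma msqrt_of_posSemidef {A : Matrix n n ℂ} (h : A.PosSemidef) : msqrt A = h.sqrt := by
  unfold msqrt
  rw [dif_pos h]
  rfl

lemma exists_polar (X : Matrix n n ℂ) :
    ∃ K : Matrix n n ℂ, K * Kᴴ = 1 ∧ Kᴴ * K = 1 ∧ X = msqrt (X * Xᴴ) * K := by
  classical
  have h : (X * Xᴴ).PosSemidef := Matrix.posSemidef_self_mul_conjTranspose X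
  have hH : (X * Xᴴ).IsHermitian := h.1
  set U : Matrix n n ℂ := (hH.eigenvectorUnitary : Matrix n n ℂ) with hUdef
  have hU1 : U * Uᴴ = 1 := by
    have := Matrix.mem_unitaryGroup_iff.mp hH.eigenvectorUnitary.2
    simpa [Matrix.star_eq_conjTranspose] using this
  have hU2 : Uᴴ * U = 1 := by
    have := Matrix.mem_unitaryGroup_iff'.mp hH.eigenvectorUnitary.2
    simpa [Matrix.star_eq_conjTranspose] using this
  set ev : n → ℝ := hH.eigenvalues with hev
  have hevnn : ∀ i, 0 ≤ ev i := h.eigenvalues_nonneg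
  set g : n → ℝ := fun i => Real.sqrt (ev i) with hg
  set D : Matrix n n ℂ := Matrix.diagonal (fun i => (g i : ℂ)) with hD
  have hspec : X * Xᴴ = U * Matrix.diagonal (fun i => (ev i : ℂ)) * Uᴴ := by
    have := hH.spectral_theorem
    simpa [Matrix.star_eq_conjTranspose, Function.comp_def] using this
  have hDD : D * D = Matrix.diagonal (fun i => (ev i : ℂ)) := by
    have e : (fun i => (g i : ℂ) * (g i : ℂ)) = fun i => (ev i : ℂ) := by
      funext i
      rw [← Complex.ofReal_mul, Real.mul_self_sqrt (hevnn i)]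
    rw [hD, Matrix.diagonal_mul_diagonal, e]
  have hP : (U * D * Uᴴ).PosSemidef := by
    apply Matrix.PosSemidef.mul_mul_conjTranspose_same
    refine Matrix.posSemidef_diagonal_iff.mpr fun i => ?_
    rw [Complex.zero_le_real]
    exact Real.sqrt_nonneg _
  have hsq : (U * D * Uᴴ) ^ 2 = X * Xᴴ := by
    rw [pow_two]
    have e1 : (U * D * Uᴴ) * (U * D * Uᴴ) = U * (D * ((Uᴴ * U) * (D * Uᴴ))) := by
      simp only [Matrix.mul_assoc]
    rw [e1, hU2, Matrix.one_mul, hspec]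
    rw [← hDD]
    simp only [Matrix.mul_assoc]
  have hsqrt : msqrt (X * Xᴴ) = U * D * Uᴴ := by
    rw [msqrt_of_posSemidef h]
    rfl
  set Y : Matrix n n ℂ := Uᴴ * X with hY
  have hXY : X = U * Y := by
    rw [hY, ← Matrix.mul_assoc, hU1, Matrix.one_mul]
  have hYY : Y * Yᴴ = Matrix.diagonal (fun i => (ev i : ℂ)) := by
    rw [hY, Matrix.conjTranspose_mul, Matrix.conjTranspose_conjTranspose]
    calc Uᴴ * X * (Xᴴ * U) = Uᴴ * (X * Xᴴ) * U := by simp only [Matrix.mul_assoc]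
    _ = (Uᴴ * U) * Matrix.diagonal (fun i => (ev i : ℂ)) * (Uᴴ * U) := by
        rw [hspec]; simp only [Matrix.mul_assoc]
    _ = Matrix.diagonal (fun i => (ev i : ℂ)) := by rw [hU2, Matrix.one_mul, Matrix.mul_one]
  have hrow : ∀ i j, (∑ k, Y i k * (starRingEnd ℂ) (Y j k))
      = if i = j then (ev i : ℂ) else 0 := by
    intro i j
    have := congrArg (fun M : Matrix n n ℂ => M i j) hYY
    simpa [Matrix.mul_apply, Matrix.conjTranspose_apply, Matrix.diagonal_apply] using this
  have hzero : ∀ i, ev i = 0 → ∀ k, Y i k = 0 := by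
    intro i h0 k
    have hs := hrow i i
    rw [if_pos rfl, h0, Complex.ofReal_zero] at hs
    have hs' : (∑ k, (Complex.normSq (Y i k) : ℂ)) = 0 := by
      rw [← hs]
      refine Finset.sum_congr rfl fun k _ => ?_
      rw [Complex.mul_conj]
    have hs'' : (∑ k, Complex.normSq (Y i k)) = 0 := by
      have := congrArg Complex.re hs'
      simpa [Complex.re_sum] using this
    have := (Finset.sum_eq_zero_iff_of_nonneg (fun k _ => Complex.normSq_nonneg (Y i k))).mp
      hs'' k (Finset.mem_univ k)
    exact Complex.normSq_eq_zero.mp this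
  set v : n → EuclideanSpace ℂ n := fun i => WithLp.toLp 2 (fun k => ((g i : ℂ))⁻¹ * Y i k) with hv
  set s : Set n := {i | ev i ≠ 0} with hs
  have hgne : ∀ i ∈ s, (g i : ℂ) ≠ 0 := by
    intro i hi
    simp only [ne_eq, Complex.ofReal_eq_zero]
    rw [hg]
    exact Real.sqrt_ne_zero'.mpr (lt_of_le_of_ne (hevnn i) (Ne.symm hi))
  have horth : Orthonormal ℂ (s.restrict v) := by
    rw [orthonormal_iff_ite]
    rintro ⟨i, hi⟩ ⟨j, hj⟩
    have hinner : (inner ℂ (s.restrict v ⟨i, hi⟩) (s.restrict v ⟨j, hj⟩) : ℂ)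
        = ∑ k, (starRingEnd ℂ) (v i k) * v j k := by
      simp [PiLp.inner_apply, RCLike.inner_apply, mul_comm]
      rfl
    rw [hinner]
    have e1 : ∀ k, (starRingEnd ℂ) (v i k) * v j k
        = ((g i : ℂ))⁻¹ * ((g j : ℂ))⁻¹ * ((starRingEnd ℂ) (Y i k) * Y j k) := by
      intro k
      simp only [hv, map_mul, map_inv₀, Complex.conj_ofReal]
      ring
    have e2 : (∑ k, (starRingEnd ℂ) (Y i k) * Y j k) = if j = i then (ev j : ℂ) else 0 := by
      rw [← hrow j i]
      refine Finset.sum_congr rfl fun k _ => mul_comm _ _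
    simp only [e1, ← Finset.mul_sum, e2]
    by_cases hij : i = j
    · subst hij
      simp only [if_pos rfl, Subtype.mk.injEq, if_pos rfl]
      rw [← mul_inv]
      rw [← Complex.ofReal_mul, Real.mul_self_sqrt (hevnn i)]
      exact inv_mul_cancel₀ (by simpa [Complex.ofReal_eq_zero, hs] using hi)
    · rw [if_neg (fun hji => hij hji.symm), if_neg (by simpa [Subtype.mk.injEq] using hij)]
      ring
  obtain ⟨b, hb⟩ := horth.exists_orthonormalBasis_extension_of_card_eq
    (by simp [finrank_euclideanSpace])
  set K' : Matrix n n ℂ := Matrix.of fun i k => b i k with hK'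
  have hK'1 : K' * K'ᴴ = 1 := by
    ext i j
    have := orthonormal_iff_ite.mp b.orthonormal i j
    have h2 : (inner ℂ (b i) (b j) : ℂ) = ∑ k, (starRingEnd ℂ) (b i k) * b j k := by
      simp [PiLp.inner_apply, RCLike.inner_apply, mul_comm]
    rw [h2] at this
    have h3 : ∑ k, b i k * (starRingEnd ℂ) (b j k)
        = (starRingEnd ℂ) (∑ k, (starRingEnd ℂ) (b i k) * b j k) := by
      rw [map_sum]
      refine Finset.sum_congr rfl fun k _ => ?_
      simp [mul_comm]
    simp only [Matrix.mul_apply, Matrix.conjTranspose_apply, hK', Matrix.of_apply,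
      Matrix.one_apply]
    show ∑ x, b i x * (starRingEnd ℂ) (b j x) = _
    rw [h3, this]
    simp [apply_ite (starRingEnd ℂ)]
  have hK'2 : K'ᴴ * K' = 1 := mul_eq_one_comm.mp hK'1
  have hDK : D * K' = Y := by
    ext i k
    rw [hD]
    rw [Matrix.diagonal_mul]
    by_cases h0 : ev i = 0
    · rw [hzero i h0 k]
      have : g i = 0 := by rw [hg]; simp [h0]
      rw [this]
      simp
    · have hbi : b i = v i := hb i h0
      have : K' i k = ((g i : ℂ))⁻¹ * Y i k := by
        rw [hK']
        simp only [Matrix.of_apply]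
        rw [hbi]
      rw [this, ← mul_assoc, mul_inv_cancel₀ (hgne i h0), one_mul]
  refine ⟨U * K', ?_, ?_, ?_⟩
  · rw [Matrix.conjTranspose_mul]
    calc U * K' * (K'ᴴ * Uᴴ) = U * (K' * K'ᴴ) * Uᴴ := by simp only [Matrix.mul_assoc]
    _ = 1 := by rw [hK'1, Matrix.mul_one, hU1]
  · rw [Matrix.conjTranspose_mul]
    calc K'ᴴ * Uᴴ * (U * K') = K'ᴴ * (Uᴴ * U) * K' := by simp only [Matrix.mul_assoc]
    _ = 1 := by rw [hU2, Matrix.mul_one, hK'2]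
  · rw [hsqrt]
    calc X = U * Y := hXY
    _ = U * (D * K') := by rw [hDK]
    _ = U * (D * ((Uᴴ * U) * K')) := by rw [hU2, Matrix.one_mul]
    _ = U * D * Uᴴ * (U * K') := by simp only [Matrix.mul_assoc]

lemma abs_trace_le_fidelity (M N : Matrix n n ℂ) :
    ‖(Mᴴ * N).trace‖ ≤ fidelity (M * Mᴴ) (N * Nᴴ) := by
  classical
  have hρ : (M * Mᴴ).PosSemidef := Matrix.posSemidef_self_mul_conjTranspose M
  obtain ⟨U₁, hU₁, hU₁', hMp⟩ := exists_polar M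
  set R : Matrix n n ℂ := msqrt (M * Mᴴ) with hR
  have hRpsd : R.PosSemidef := by rw [hR, msqrt_of_posSemidef hρ]; exact hρ.posSemidef_sqrt
  have hRH : Rᴴ = R := hRpsd.1
  set X : Matrix n n ℂ := R * N with hX
  have hXXH : X * Xᴴ = R * (N * Nᴴ) * R := by
    rw [hX, Matrix.conjTranspose_mul, hRH]
    simp only [Matrix.mul_assoc]
  have hfid : fidelity (M * Mᴴ) (N * Nᴴ) = (msqrt (X * Xᴴ)).trace.re := by
    rw [hXXH]
    rfl
  obtain ⟨K, hK, hK', hXp⟩ := exists_polar X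
  have hPpsd : (msqrt (X * Xᴴ)).PosSemidef := by
    rw [msqrt_of_posSemidef (Matrix.posSemidef_self_mul_conjTranspose X)]
    exact (Matrix.posSemidef_self_mul_conjTranspose X).posSemidef_sqrt
  set P : Matrix n n ℂ := msqrt (X * Xᴴ) with hPdef
  have htr : (Mᴴ * N).trace = (P * (K * U₁ᴴ)).trace := by
    conv_lhs => rw [hMp]
    rw [Matrix.conjTranspose_mul, hRH, Matrix.mul_assoc, ← hX, hXp,
      Matrix.trace_mul_comm, Matrix.mul_assoc]
  have hW : (K * U₁ᴴ) * (K * U₁ᴴ)ᴴ = 1 := by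
    rw [Matrix.conjTranspose_mul, Matrix.conjTranspose_conjTranspose]
    calc K * U₁ᴴ * (U₁ * Kᴴ) = K * (U₁ᴴ * U₁) * Kᴴ := by simp only [Matrix.mul_assoc]
    _ = 1 := by rw [hU₁', Matrix.mul_one, hK]
  rw [htr, hfid]
  exact abs_trace_psd_mul_unitary_le hPpsd hW

lemma traceRight_proj (d : ℕ) (ψ : Fin d × Fin d → ℂ) :
    traceRight (proj ψ) =
      (Matrix.of fun i j : Fin d => ψ (i, j)) * (Matrix.of fun i j : Fin d => ψ (i, j))ᴴ := by
  ext i j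
  simp [traceRight, proj, Matrix.mul_apply, Matrix.conjTranspose_apply]

lemma traceLeft_proj (d : ℕ) (ψ : Fin d × Fin d → ℂ) :
    traceLeft (proj ψ) =
      (Matrix.of fun i j : Fin d => ψ (i, j))ᵀ * ((Matrix.of fun i j : Fin d => ψ (i, j))ᵀ)ᴴ := by
  ext i j
  simp [traceLeft, proj, Matrix.mul_apply, Matrix.conjTranspose_apply, Matrix.transpose_apply]

lemma swap_trace_eq (d : ℕ) (ψ : Fin d × Fin d → ℂ) :
    (swap d * proj ψ).trace =
      ((Matrix.of fun i j : Fin d => ψ (i, j))ᴴ * (Matrix.of fun i j : Fin d => ψ (i, j))ᵀ).trace := by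
  classical
  have lhs : (swap d * proj ψ).trace = ∑ p : Fin d × Fin d, ψ (p.2, p.1) * star (ψ p) := by
    unfold Matrix.trace
    simp only [Matrix.diag, Matrix.mul_apply, swap, proj, Matrix.of_apply, ite_mul, zero_mul,
      one_mul]
    refine Finset.sum_congr rfl fun p _ => ?_
    rw [Finset.sum_eq_single ((p.2, p.1) : Fin d × Fin d)]
    · simp
    · intro q _ hq
      have : ¬(p.1 = q.2 ∧ p.2 = q.1) := by
        rintro ⟨h1, h2⟩
        exact hq (Prod.ext h2.symm h1.symm)
      simp [this]
    · intro hmem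
      exact absurd (Finset.mem_univ _) hmem
  have rhs : ((Matrix.of fun i j : Fin d => ψ (i, j))ᴴ *
      (Matrix.of fun i j : Fin d => ψ (i, j))ᵀ).trace
      = ∑ p : Fin d × Fin d, star (ψ (p.2, p.1)) * ψ (p.1, p.2) := by
    unfold Matrix.trace
    rw [Fintype.sum_prod_type]
    simp [Matrix.diag, Matrix.mul_apply, Matrix.conjTranspose_apply, Matrix.transpose_apply]
  rw [lhs, rhs]
  refine Fintype.sum_equiv (Equiv.prodComm (Fin d) (Fin d)) _ _ fun p => ?_
  obtain ⟨i, j⟩ := p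
  simp only [Equiv.prodComm_apply, Prod.swap_prod_mk]
  rw [mul_comm]


theorem stmt2 (d : ℕ) (ψ : Fin d × Fin d → ℂ) (hψ : ∑ p, ‖ψ p‖ ^ 2 = 1) :
    fidelity (traceRight (proj ψ)) (traceLeft (proj ψ))
      ≥ |((Pasym d * proj ψ).trace).re - ((Psym d * proj ψ).trace).re| := by
  classical
  set M : Matrix (Fin d) (Fin d) ℂ := Matrix.of fun i j => ψ (i, j) with hM
  have hA := traceRight_proj d ψ
  have hB := traceLeft_proj d ψ
  rw [hA, hB]
  have e0 : (Pasym d * proj ψ).trace - (Psym d * proj ψ).trace = -((swap d * proj ψ).trace) := by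
    rw [Pasym, Psym, Matrix.smul_mul, Matrix.smul_mul, Matrix.trace_smul, Matrix.trace_smul,
      Matrix.sub_mul, Matrix.add_mul, Matrix.trace_sub, Matrix.trace_add, Matrix.one_mul]
    simp only [smul_eq_mul]
    ring
  have e1 : ((Pasym d * proj ψ).trace).re - ((Psym d * proj ψ).trace).re
      = (-((Mᴴ * Mᵀ).trace)).re := by
    rw [← Complex.sub_re, e0, swap_trace_eq d ψ]
  rw [e1]
  rw [ge_iff_le]
  calc |(-((Mᴴ * Mᵀ).trace)).re| ≤ ‖-((Mᴴ * Mᵀ).trace)‖ := Complex.abs_re_le_norm _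
  _ = ‖(Mᴴ * Mᵀ).trace‖ := by
      rw [norm_neg]
  _ ≤ fidelity (M * Mᴴ) (Mᵀ * Mᵀᴴ) := abs_trace_le_fidelity M Mᵀ
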